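/- Let v₁, …, vₙ ∈ ℝ² be the oriented edge vectors vᵢ = (xᵢ, zᵢ) of a closed planar polyline in the XZ-plane, with zᵢ ≠ 0 for every i. Assume: (a) ∑ᵢ xᵢ = 0 (closure in the x-direction); (b) for every real number c, the sum of the oriented lengths sign(zᵢ)·‖vᵢ‖ over the class {i : |zᵢ|/‖vᵢ‖ = c} equals zero. Then for every t ∈ [−1, 1] the deformed edge vectors wᵢ(t) = (t·xᵢ, sign(zᵢ)·√((1−t²)·xᵢ² + zᵢ²)) also sum to zero, i.e., the cross-sectional polyline remains closed throughout the whole isometric deformation of T-type (note wᵢ(1) = vᵢ). -/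

import Mathlib

open Classical in
/-- Theorem 1 (closed-discrete-profile): a closed cross-sectional polyline whose
edge vectors satisfy the class-wise oriented-length conditions remains closed
under the whole isometric deformation of T-type. -/
theorem closed_discrete_profile (n : ℕ) (x z : Fin n → ℝ)
    (hz : ∀ i, z i ≠ 0)
    (hx : ∑ i, x i = 0)
    (hclass : ∀ c : ℝ,
      ∑ i ∈ Finset.univ.filter
          (fun i => |z i| / Real.sqrt (x i ^ 2 + z i ^ 2) = c),
        Real.sign (z i) * Real.sqrt (x i ^ 2 + z i ^ 2) = 0) :
    ∀ t ∈ Set.Icc (-1 : ℝ) 1,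
      (∑ i, t * x i = 0) ∧
      (∑ i, Real.sign (z i) *
          Real.sqrt ((1 - t ^ 2) * x i ^ 2 + z i ^ 2) = 0) := by
  intro t ht
  obtain ⟨ht1, ht2⟩ := ht
  have ht2' : t ^ 2 ≤ 1 := by nlinarith
  refine ⟨by rw [← Finset.mul_sum, hx, mul_zero], ?_⟩
  set f : Fin n → ℝ := fun i => |z i| / Real.sqrt (x i ^ 2 + z i ^ 2) with hf
  have key : ∀ i : Fin n,
      Real.sign (z i) * Real.sqrt ((1 - t ^ 2) * x i ^ 2 + z i ^ 2)
      = Real.sqrt (1 - t ^ 2 * (1 - (f i) ^ 2)) *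
        (Real.sign (z i) * Real.sqrt (x i ^ 2 + z i ^ 2)) := by
    intro i
    have hz2 : (0 : ℝ) < z i ^ 2 := pow_pos (abs_pos.mpr (hz i)) 2 |>.trans_le (by rw [sq_abs])
    have hs : (0 : ℝ) < x i ^ 2 + z i ^ 2 := by positivity
    have hsq : Real.sqrt (x i ^ 2 + z i ^ 2) ^ 2 = x i ^ 2 + z i ^ 2 :=
      Real.sq_sqrt hs.le
    have hc2 : (f i) ^ 2 = z i ^ 2 / (x i ^ 2 + z i ^ 2) := by
      rw [hf]
      simp only [div_pow, sq_abs, hsq]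
    have hnn : (0 : ℝ) ≤ 1 - t ^ 2 * (1 - (f i) ^ 2) := by
      rw [hc2]
      have h1 : 1 - z i ^ 2 / (x i ^ 2 + z i ^ 2) = x i ^ 2 / (x i ^ 2 + z i ^ 2) := by
        field_simp
        ring
      rw [h1]
      have h2 : x i ^ 2 / (x i ^ 2 + z i ^ 2) ≤ 1 := by
        rw [div_le_one hs]; nlinarith
      have h3 : (0 : ℝ) ≤ x i ^ 2 / (x i ^ 2 + z i ^ 2) := by positivity
      nlinarith [sq_nonneg t]
    rw [mul_left_comm, ← Real.sqrt_mul hnn]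
    congr 2
    rw [hc2]
    field_simp
    ring
  rw [Finset.sum_congr rfl (fun i _ => key i)]
  rw [← Finset.sum_fiberwise_of_maps_to
    (fun i _ => Finset.mem_image_of_mem f (Finset.mem_univ i))
    (fun i => Real.sqrt (1 - t ^ 2 * (1 - (f i) ^ 2)) *
        (Real.sign (z i) * Real.sqrt (x i ^ 2 + z i ^ 2)))]
  refine Finset.sum_eq_zero fun c _ => ?_
  have hcongr : ∀ i ∈ Finset.univ.filter (fun i => f i = c),
      Real.sqrt (1 - t ^ 2 * (1 - (f i) ^ 2)) *
        (Real.sign (z i) * Real.sqrt (x i ^ 2 + z i ^ 2))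
      = Real.sqrt (1 - t ^ 2 * (1 - c ^ 2)) *
        (Real.sign (z i) * Real.sqrt (x i ^ 2 + z i ^ 2)) := by
    intro i hi
    rw [Finset.mem_filter] at hi
    rw [hi.2]
  rw [Finset.sum_congr rfl hcongr, ← Finset.mul_sum]
  have := hclass c
  rw [hf, this, mul_zero]
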